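/- Let K ≥ 2, σ² > 0, 0 < C_1 ≤ … ≤ C_K, R_k^Min > 0 with A_k := 2^{R_k^Min} − 1 and D_k := A_k/(1+A_k), and let a*_k(θ) be defined as in Theorem 2 with x*_k(θ) = Σ_{i>k} a*_i(θ). Let c_K > 0 be the constant slope of a*_K (so a*_K(θ) = a*_K(0) + c_K·θ). Then at every θ > 0 with x*_k(θ) > 0 for all k ≤ K−1, the function N(θ) := log₂(C_1·θ + σ²) + Σ_{k=1}^{K−1}[log₂(C_{k+1}·x*_k(θ) + σ²) − log₂(C_k·x*_k(θ) + σ²)] is differentiable with derivative N′(θ) = (1/ln 2)·C_K·c_K/(σ² + C_K·a*_K(θ)). -/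

import Mathlib

/-- The derivative computation underlying equation (26) of the paper: at the optimal
allocation `a*(θ)` of Theorem 2, the optimized sum rate
`N(θ) = log₂(C_1 θ + σ²) + ∑_{k=1}^{K−1} [log₂(C_{k+1} x*_k(θ) + σ²) − log₂(C_k x*_k(θ) + σ²)]`
is differentiable at every `θ > 0` with all `x*_k(θ) > 0`, with derivative
`N′(θ) = (1/ln 2) · C_K c_K / (σ² + C_K a*_K(θ))`, where `c_K > 0` is the constant slope of
the affine map `θ ↦ a*_K(θ)`. -/
theorem stmt_17 (K : ℕ) (hK : 2 ≤ K) (σ2 : ℝ) (hσ : 0 < σ2)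
    (C : ℕ → ℝ)
    (hCpos : ∀ k ∈ Finset.Icc 1 K, 0 < C k)
    (hCmono : ∀ k ∈ Finset.Icc 1 (K - 1), C k ≤ C (k + 1))
    (RMin : ℕ → ℝ) (hR : ∀ k ∈ Finset.Icc 1 K, 0 < RMin k)
    (A : ℕ → ℝ) (hA : ∀ k, A k = (2 : ℝ) ^ RMin k - 1)
    (D : ℕ → ℝ) (hD : ∀ k, D k = A k / (1 + A k))
    (astar : ℝ → ℕ → ℝ)
    (hastar : ∀ θ : ℝ, ∀ k ∈ Finset.Icc 1 (K - 1),
      astar θ k = D k * (θ - ∑ i ∈ Finset.Ico 1 k, astar θ i) + D k * σ2 / C k)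
    (hastarK : ∀ θ : ℝ, astar θ K = θ - ∑ i ∈ Finset.Ico 1 K, astar θ i)
    (xstar : ℝ → ℕ → ℝ)
    (hxstar : ∀ θ k, xstar θ k = ∑ i ∈ Finset.Ioc k K, astar θ i)
    (cK : ℝ) (hcK : 0 < cK)
    (hslope : ∀ θ : ℝ, astar θ K = astar 0 K + cK * θ)
    (N : ℝ → ℝ)
    (hN : ∀ θ : ℝ, N θ = Real.logb 2 (C 1 * θ + σ2) +
      ∑ k ∈ Finset.Icc 1 (K - 1),
        (Real.logb 2 (C (k + 1) * xstar θ k + σ2) -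
          Real.logb 2 (C k * xstar θ k + σ2))) :
    ∀ θ : ℝ, 0 < θ → (∀ k ∈ Finset.Icc 1 (K - 1), 0 < xstar θ k) →
      HasDerivAt N (1 / Real.log 2 * (C K * cK / (σ2 + C K * astar θ K))) θ := by
  intro θ hθ hxpos
  -- basic facts about D
  have hAK : ∀ k ∈ Finset.Icc 1 K, 1 + A k = (2:ℝ) ^ RMin k := by
    intro k hk; rw [hA k]; ring
  have h2pos : ∀ k ∈ Finset.Icc 1 K, (0:ℝ) < (2:ℝ) ^ RMin k :=
    fun k hk => Real.rpow_pos_of_pos (by norm_num) _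
  have hDsub : ∀ k ∈ Finset.Icc 1 K, 1 - D k = (2:ℝ) ^ (-RMin k) := by
    intro k hk
    have h1 : 1 + A k = (2:ℝ) ^ RMin k := hAK k hk
    have h2 : (0:ℝ) < (2:ℝ) ^ RMin k := h2pos k hk
    rw [hD k, Real.rpow_neg (by norm_num)]
    field_simp [h1]
    rw [h1, sub_mul, div_mul_cancel₀ _ h2.ne']; linarith [h1]
  have hDpos : ∀ k ∈ Finset.Icc 1 K, (0:ℝ) < 1 - D k := by
    intro k hk
    rw [hDsub k hk]
    exact Real.rpow_pos_of_pos (by norm_num) _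
  have hlogD : ∀ k ∈ Finset.Icc 1 K, Real.logb 2 (1 - D k) = -RMin k := by
    intro k hk
    rw [hDsub k hk]
    exact Real.logb_rpow (by norm_num) (by norm_num)
  -- total power
  have htot : ∀ θ' : ℝ, ∑ i ∈ Finset.Icc 1 K, astar θ' i = θ' := by
    intro θ'
    have hins : Finset.Icc 1 K = insert K (Finset.Ico 1 K) := by
      ext x; simp [Finset.mem_Icc, Finset.mem_Ico]; omega
    rw [hins, Finset.sum_insert (by simp)]
    rw [hastarK θ']; ring
  -- xstar at 0
  have hx0 : ∀ θ' : ℝ, xstar θ' 0 = θ' := by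
    intro θ'
    rw [hxstar]
    rw [show Finset.Ioc 0 K = Finset.Icc 1 K by ext x; simp [Finset.mem_Icc, Finset.mem_Ioc]; omega]
    exact htot θ'
  -- xstar (K-1) = astar K
  have hxK1 : ∀ θ' : ℝ, xstar θ' (K-1) = astar θ' K := by
    intro θ'
    rw [hxstar]
    rw [show Finset.Ioc (K-1) K = {K} by ext x; simp [Finset.mem_Ioc]; omega]
    simp
  -- splitting
  have hsplit : ∀ θ' : ℝ, ∀ k ∈ Finset.Icc 1 (K-1),
      xstar θ' (k-1) = astar θ' k + xstar θ' k := by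
    intro θ' k hk
    simp only [Finset.mem_Icc] at hk
    rw [hxstar, hxstar, show Finset.Ioc (k-1) K = insert k (Finset.Ioc k K) by
      ext x; simp [Finset.mem_Ioc]; omega]
    rw [Finset.sum_insert (by simp)]
  have hrem : ∀ θ' : ℝ, ∀ k ∈ Finset.Icc 1 (K-1),
      θ' - ∑ i ∈ Finset.Ico 1 k, astar θ' i = xstar θ' (k-1) := by
    intro θ' k hk
    simp only [Finset.mem_Icc] at hk
    have hdisj : Disjoint (Finset.Ico 1 k) (Finset.Ioc (k-1) K) := by
      rw [Finset.disjoint_left]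
      intro x hx hx'
      simp [Finset.mem_Ico] at hx
      simp [Finset.mem_Ioc] at hx'
      omega
    have hun : Finset.Ico 1 k ∪ Finset.Ioc (k-1) K = Finset.Icc 1 K := by
      ext x; simp [Finset.mem_Ico, Finset.mem_Ioc, Finset.mem_Icc]; omega
    have h3 := Finset.sum_union (f := astar θ') hdisj
    rw [hun, htot θ'] at h3
    rw [hxstar]
    linarith [h3]
  -- the key multiplicative step
  have hstep : ∀ θ' : ℝ, ∀ k ∈ Finset.Icc 1 (K-1),
      C k * xstar θ' k + σ2 = (1 - D k) * (C k * xstar θ' (k-1) + σ2) := by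
    intro θ' k hk
    have hkK : k ∈ Finset.Icc 1 K := by
      simp only [Finset.mem_Icc] at *; omega
    have hC : C k ≠ 0 := ne_of_gt (hCpos k hkK)
    have h1 := hastar θ' k hk
    rw [hrem θ' k hk] at h1
    have h2 := hsplit θ' k hk
    field_simp at h1
    linear_combination -C k * h2 - h1
  -- continuity of astar and xstar
  have hconta : ∀ k, 1 ≤ k → k ≤ K - 1 → Continuous (fun θ' => astar θ' k) := by
    intro k
    induction k using Nat.strong_induction_on with
    | _ k ih =>
      intro hk1 hk2
      have : (fun θ' => astar θ' k) = fun θ' =>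
          D k * (θ' - ∑ i ∈ Finset.Ico 1 k, astar θ' i) + D k * σ2 / C k := by
        funext θ'
        exact hastar θ' k (by simp [Finset.mem_Icc]; omega)
      rw [this]
      apply Continuous.add _ continuous_const
      apply Continuous.mul continuous_const
      apply Continuous.sub continuous_id
      apply continuous_finset_sum
      intro i hi
      simp [Finset.mem_Ico] at hi
      exact ih i (by omega) (by omega) (by omega)
  have hcontaK : Continuous (fun θ' => astar θ' K) := by
    have : (fun θ' => astar θ' K) = fun θ' => astar 0 K + cK * θ' := by
      funext θ'; exact hslope θ'
    rw [this]; exact continuous_const.add (continuous_const.mul continuous_id)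
  have hcontx : ∀ k ∈ Finset.Icc 1 (K-1), Continuous (fun θ' => xstar θ' k) := by
    intro k hk
    simp only [Finset.mem_Icc] at hk
    have : (fun θ' => xstar θ' k) = fun θ' => ∑ i ∈ Finset.Ioc k K, astar θ' i := by
      funext θ'; exact hxstar θ' k
    rw [this]
    apply continuous_finset_sum
    intro i hi
    simp [Finset.mem_Ioc] at hi
    rcases eq_or_lt_of_le hi.2 with h | h
    · subst h; exact hcontaK
    · exact hconta i (by omega) (by omega)
  -- the open set
  set U : Set ℝ := {θ' | 0 < θ'} ∩ ⋂ k ∈ Finset.Icc 1 (K-1), {θ' | 0 < xstar θ' k} with hU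
  have hUopen : IsOpen U := by
    apply IsOpen.inter isOpen_Ioi
    apply Set.Finite.isOpen_biInter (Finset.finite_toSet _)
    intro k hk
    exact isOpen_lt continuous_const (hcontx k hk)
  have hθU : θ ∈ U := by
    constructor
    · exact hθ
    · simp only [Set.mem_iInter]
      intro k hk
      exact hxpos k hk
  -- the key identity on U
  have key : ∀ θ' ∈ U, N θ' = Real.logb 2 (C K * (astar 0 K + cK * θ') + σ2)
      + ∑ k ∈ Finset.Icc 1 (K-1), RMin k := by
    intro θ' hθ'
    obtain ⟨hθ'pos, hθ'x⟩ := hθ'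
    simp only [Set.mem_iInter] at hθ'x
    have hxp : ∀ k ∈ Finset.Icc 1 (K-1), 0 < xstar θ' k := fun k hk => hθ'x k hk
    have hxprev : ∀ k ∈ Finset.Icc 1 (K-1), 0 < xstar θ' (k-1) := by
      intro k hk
      simp only [Finset.mem_Icc] at hk
      rcases Nat.eq_or_lt_of_le hk.1 with h | h
      · rw [← h]; simpa [hx0 θ'] using hθ'pos
      · exact hxp (k-1) (by simp [Finset.mem_Icc]; omega)
    set f : ℕ → ℝ := fun k => Real.logb 2 (C (k+1) * xstar θ' k + σ2) with hf
    have hlogstep : ∀ k ∈ Finset.Icc 1 (K-1),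
        Real.logb 2 (C k * xstar θ' k + σ2)
          = Real.logb 2 (C k * xstar θ' (k-1) + σ2) - RMin k := by
      intro k hk
      have hkK : k ∈ Finset.Icc 1 K := by simp only [Finset.mem_Icc] at *; omega
      have hYpos : 0 < C k * xstar θ' (k-1) + σ2 := by
        have := hCpos k hkK
        nlinarith [hxprev k hk]
      rw [hstep θ' k hk, Real.logb_mul (ne_of_gt (hDpos k hkK)) (ne_of_gt hYpos),
        hlogD k hkK]
      ring
    have hNval := hN θ'
    have hsum : ∑ k ∈ Finset.Icc 1 (K-1),
        (Real.logb 2 (C (k + 1) * xstar θ' k + σ2) -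
          Real.logb 2 (C k * xstar θ' k + σ2))
        = (f (K-1) - f 0) + ∑ k ∈ Finset.Icc 1 (K-1), RMin k := by
      have h1 : ∀ k ∈ Finset.Icc 1 (K-1),
          Real.logb 2 (C (k + 1) * xstar θ' k + σ2) -
            Real.logb 2 (C k * xstar θ' k + σ2)
          = (f k - f (k-1)) + RMin k := by
        intro k hk
        have hk1 : k - 1 + 1 = k := by simp only [Finset.mem_Icc] at hk; omega
        rw [hlogstep k hk]
        simp only [hf, hk1]
        ring
      rw [Finset.sum_congr rfl h1, Finset.sum_add_distrib]
      congr 1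
      have hIcc : Finset.Icc 1 (K-1) = Finset.Ico 1 K := by
        ext x; simp [Finset.mem_Icc, Finset.mem_Ico]; omega
      rw [hIcc, Finset.sum_Ico_eq_sum_range]
      have : ∀ i, f (1 + i) - f (1 + i - 1) = f (i+1) - f i := by
        intro i; congr 1 <;> congr 1 <;> omega
      rw [Finset.sum_congr rfl fun i _ => this i]
      rw [Finset.sum_range_sub f]
    rw [hNval, hsum]
    have hf0 : f 0 = Real.logb 2 (C 1 * θ' + σ2) := by
      simp only [hf, hx0 θ']
    have hfK : f (K-1) = Real.logb 2 (C K * (astar 0 K + cK * θ') + σ2) := by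
      simp only [hf]
      rw [hxK1 θ', hslope θ', show K - 1 + 1 = K by omega]
    rw [hf0, hfK]
    ring
  -- derivative of the RHS
  have haKpos : 0 < astar θ K := by
    rw [← hxK1 θ]
    exact hxpos (K-1) (by simp [Finset.mem_Icc]; omega)
  have hupos : 0 < C K * (astar 0 K + cK * θ) + σ2 := by
    have hCK : 0 < C K := hCpos K (by simp [Finset.mem_Icc]; omega)
    have := hslope θ
    nlinarith [haKpos]
  have hu : HasDerivAt (fun θ' => C K * (astar 0 K + cK * θ') + σ2) (C K * cK) θ := by
    have h1 : HasDerivAt (fun θ' : ℝ => astar 0 K + cK * θ') cK θ := by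
      simpa using ((hasDerivAt_id θ).const_mul cK).const_add (astar 0 K)
    simpa using (h1.const_mul (C K)).add_const σ2
  have hg : HasDerivAt (fun θ' => Real.logb 2 (C K * (astar 0 K + cK * θ') + σ2)
      + ∑ k ∈ Finset.Icc 1 (K-1), RMin k)
      (1 / Real.log 2 * (C K * cK / (σ2 + C K * astar θ K))) θ := by
    have hlog := hu.log (ne_of_gt hupos)
    have hder := (hlog.div_const (Real.log 2)).add_const (∑ k ∈ Finset.Icc 1 (K-1), RMin k)
    simp only [Real.logb]
    refine hder.congr_deriv ?_
    rw [hslope θ]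
    ring
  apply hg.congr_of_eventuallyEq
  filter_upwards [hUopen.mem_nhds hθU] with θ' hθ'
  exact key θ' hθ'
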